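/- For p ∈ (1, 2] and all x, y > 0, one has r(x,y)(log x - log y)(Φ_p'(x) - Φ_p'(y)) ≥ (4/p)(x^{p/2} - y^{p/2})², whenever r : (0,∞)² → (0,∞) satisfies (x-y)/(log x - log y) ≤ r(x,y) for x ≠ y (and r(x,x) = x). -/

import Mathlib

open Real MeasureTheory

/-- Cauchy–Schwarz key inequality:
`(x^{p/2} - y^{p/2})² ≤ p²/(4(p-1)) (x-y)(x^{p-1}-y^{p-1})` for `0 < y < x`, `1 < p ≤ 2`. -/
lemma cs_key {p x y : ℝ} (hp1 : 1 < p) (hp2 : p ≤ 2) (hy : 0 < y) (hxy : y < x) :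
    (x ^ (p / 2) - y ^ (p / 2)) ^ 2 ≤
      (p ^ 2 / (4 * (p - 1))) * ((x - y) * (x ^ (p - 1) - y ^ (p - 1))) := by
  have hx : 0 < x := hy.trans hxy
  set μ := volume.restrict (Set.Ioc y x) with hμ
  have hfin : IsFiniteMeasure μ := by
    constructor
    rw [hμ, Measure.restrict_apply_univ]
    exact measure_Ioc_lt_top
  set f : ℝ → ℝ := fun s => s ^ (p / 2 - 1) with hf
  have hmeas : AEStronglyMeasurable f μ := by
    rw [hμ]
    exact (continuousOn_id.rpow_const fun a ha =>
      Or.inl (ne_of_gt (hy.trans ha.1))).aestronglyMeasurable measurableSet_Ioc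
  have hae : ∀ᵐ a ∂μ, a ∈ Set.Ioc y x := ae_restrict_mem measurableSet_Ioc
  have hbound : ∀ᵐ a ∂μ, ‖f a‖ ≤ y ^ (p / 2 - 1) := by
    filter_upwards [hae] with a ha
    have ha0 : 0 < a := hy.trans ha.1
    rw [Real.norm_of_nonneg (Real.rpow_nonneg ha0.le _)]
    exact Real.rpow_le_rpow_of_nonpos hy ha.1.le (by linarith)
  have hfmem : MemLp f (ENNReal.ofReal 2) μ :=
    MemLp.of_bound hmeas _ hbound
  have hgmem : MemLp (fun _ : ℝ => (1 : ℝ)) (ENNReal.ofReal 2) μ := memLp_const 1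
  have hconj : (2 : ℝ).HolderConjugate 2 := Real.HolderConjugate.two_two
  have hf_nonneg : 0 ≤ᵐ[μ] f := by
    filter_upwards [hae] with a ha
    exact Real.rpow_nonneg (hy.trans ha.1).le _
  have hg_nonneg : 0 ≤ᵐ[μ] (fun _ : ℝ => (1 : ℝ)) :=
    Filter.Eventually.of_forall fun _ => zero_le_one
  have hCS := integral_mul_le_Lp_mul_Lq_of_nonneg hconj hf_nonneg hg_nonneg hfmem hgmem
  -- compute the three integrals
  have hI1 : ∫ a, f a * 1 ∂μ = (x ^ (p / 2) - y ^ (p / 2)) * (2 / p) := by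
    simp only [mul_one]
    rw [hμ, ← intervalIntegral.integral_of_le hxy.le]
    have : (∫ a in y..x, f a) = ∫ a in y..x, a ^ (p / 2 - 1) := rfl
    rw [this, integral_rpow (Or.inl (by linarith))]
    have h1 : p / 2 - 1 + 1 = p / 2 := by ring
    rw [h1]
    field_simp
  have hI2 : ∫ a, f a ^ (2 : ℝ) ∂μ = (x ^ (p - 1) - y ^ (p - 1)) / (p - 1) := by
    have hcongr : ∫ a, f a ^ (2 : ℝ) ∂μ = ∫ a, a ^ (p - 2) ∂μ := by
      refine integral_congr_ae ?_
      filter_upwards [hae] with a ha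
      have ha0 : (0 : ℝ) ≤ a := (hy.trans ha.1).le
      show (a ^ (p / 2 - 1)) ^ (2:ℝ) = a ^ (p - 2)
      rw [← Real.rpow_mul ha0]
      congr 1
      ring
    rw [hcongr, hμ, ← intervalIntegral.integral_of_le hxy.le]
    rw [integral_rpow (Or.inl (by linarith))]
    have h1 : p - 2 + 1 = p - 1 := by ring
    rw [h1]
  have hI3 : ∫ a, (1 : ℝ) ^ (2 : ℝ) ∂μ = x - y := by
    simp only [Real.one_rpow]
    rw [hμ, integral_const]
    simp [Measure.restrict_apply_univ, Real.volume_Ioc, ENNReal.toReal_ofReal (by linarith : (0:ℝ) ≤ x - y), hxy.le]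
  rw [hI1, hI2, hI3] at hCS
  set A : ℝ := (x ^ (p / 2) - y ^ (p / 2)) * (2 / p) with hA
  set B : ℝ := (x ^ (p - 1) - y ^ (p - 1)) / (p - 1) with hB
  have hxp : y ^ (p - 1) ≤ x ^ (p - 1) :=
    Real.rpow_le_rpow hy.le hxy.le (by linarith)
  have hB0 : 0 ≤ B := by
    apply div_nonneg (by linarith) (by linarith)
  have hCxy : (0 : ℝ) ≤ x - y := by linarith
  have hA0 : 0 ≤ A := by
    apply mul_nonneg _ (by positivity)
    have := Real.rpow_le_rpow hy.le hxy.le (by positivity : (0:ℝ) ≤ p / 2)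
    linarith
  have hsq : A ^ 2 ≤ B * (x - y) := by
    have hR0 : 0 ≤ B ^ ((1:ℝ)/2) * (x - y) ^ ((1:ℝ)/2) :=
      mul_nonneg (Real.rpow_nonneg hB0 _) (Real.rpow_nonneg hCxy _)
    have h2 : A ^ 2 ≤ (B ^ ((1:ℝ)/2) * (x - y) ^ ((1:ℝ)/2)) ^ 2 := by
      apply sq_le_sq' (by linarith) hCS
    calc A ^ 2 ≤ (B ^ ((1:ℝ)/2) * (x - y) ^ ((1:ℝ)/2)) ^ 2 := h2
      _ = (B ^ ((1:ℝ)/2)) ^ (2:ℕ) * ((x - y) ^ ((1:ℝ)/2)) ^ (2:ℕ) := by ring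
      _ = B * (x - y) := by
          rw [← Real.rpow_natCast (B ^ ((1:ℝ)/2)) 2, ← Real.rpow_mul hB0,
            ← Real.rpow_natCast ((x - y) ^ ((1:ℝ)/2)) 2, ← Real.rpow_mul hCxy]
          norm_num
  -- unfold A, B and conclude
  have hp0 : (0 : ℝ) < p := by linarith
  have hp1' : (0 : ℝ) < p - 1 := by linarith
  rw [hA, hB] at hsq
  have key : ((x ^ (p / 2) - y ^ (p / 2)) * (2 / p)) ^ 2 * (p ^ 2 / 4) * (p - 1) ≤
      (x ^ (p - 1) - y ^ (p - 1)) * (x - y) * (p ^ 2 / 4) := by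
    have h4 : (0 : ℝ) < p ^ 2 / 4 := by positivity
    calc ((x ^ (p / 2) - y ^ (p / 2)) * (2 / p)) ^ 2 * (p ^ 2 / 4) * (p - 1)
        ≤ ((x ^ (p - 1) - y ^ (p - 1)) / (p - 1) * (x - y)) * (p ^ 2 / 4) * (p - 1) := by
          apply mul_le_mul_of_nonneg_right (mul_le_mul_of_nonneg_right hsq h4.le) hp1'.le
      _ = (x ^ (p - 1) - y ^ (p - 1)) * (x - y) * (p ^ 2 / 4) := by
          field_simp
  have hexp : ((x ^ (p / 2) - y ^ (p / 2)) * (2 / p)) ^ 2 =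
      (x ^ (p / 2) - y ^ (p / 2)) ^ 2 * (4 / p ^ 2) := by
    field_simp
    ring
  rw [hexp] at key
  have key2 : (x ^ (p / 2) - y ^ (p / 2)) ^ 2 * (p - 1) ≤
      (x ^ (p - 1) - y ^ (p - 1)) * (x - y) * (p ^ 2 / 4) := by
    have heq : (x ^ (p / 2) - y ^ (p / 2)) ^ 2 * (4 / p ^ 2) * (p ^ 2 / 4) * (p - 1) =
        (x ^ (p / 2) - y ^ (p / 2)) ^ 2 * (p - 1) := by
      field_simp
    linarith [key, heq.symm.le, heq.le]
  have hrw : (p ^ 2 / (4 * (p - 1))) * ((x - y) * (x ^ (p - 1) - y ^ (p - 1))) =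
      ((x ^ (p - 1) - y ^ (p - 1)) * (x - y) * (p ^ 2 / 4)) / (p - 1) := by
    field_simp
  rw [hrw, le_div_iff₀ hp1']
  linarith

theorem dissipation_lower_bound (p : ℝ) (hp : p ∈ Set.Ioc (1 : ℝ) 2)
    (r : ℝ → ℝ → ℝ)
    (hr_low : ∀ x y : ℝ, 0 < x → 0 < y → x ≠ y →
      (x - y) / (Real.log x - Real.log y) ≤ r x y)
    (hr_diag : ∀ x : ℝ, 0 < x → r x x = x)
    (x y : ℝ) (hx : 0 < x) (hy : 0 < y) :
    (4 / p) * (x ^ (p / 2) - y ^ (p / 2)) ^ 2 ≤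
      r x y * (Real.log x - Real.log y) *
        ((p * (x ^ (p - 1) - 1) / (p - 1)) - (p * (y ^ (p - 1) - 1) / (p - 1))) := by
  obtain ⟨hp1, hp2⟩ := hp
  have hp0 : (0 : ℝ) < p := by linarith
  have hp1' : (0 : ℝ) < p - 1 := by linarith
  by_cases hxy : x = y
  · subst hxy
    simp
  -- x ≠ y
  have hD : (p * (x ^ (p - 1) - 1) / (p - 1)) - (p * (y ^ (p - 1) - 1) / (p - 1)) =
      p / (p - 1) * (x ^ (p - 1) - y ^ (p - 1)) := by
    field_simp
    ring
  set L : ℝ := Real.log x - Real.log y with hL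
  rw [hD]
  set D : ℝ := p / (p - 1) * (x ^ (p - 1) - y ^ (p - 1)) with hDdef
  have hrl := hr_low x y hx hy hxy
  -- Step 1: (x - y) * D ≤ r x y * L * D
  have step1 : (x - y) * D ≤ r x y * L * D := by
    rcases lt_or_gt_of_ne hxy with hlt | hgt
    · -- x < y : L < 0, D ≤ 0
      have hLneg : L < 0 := by
        have := Real.log_lt_log hx hlt
        simp only [hL]; linarith
      have hDneg : D ≤ 0 := by
        have : x ^ (p - 1) ≤ y ^ (p - 1) := Real.rpow_le_rpow hx.le hlt.le hp1'.le
        have hpd : 0 < p / (p - 1) := by positivity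
        rw [hDdef]
        nlinarith
      have h1 : r x y * L ≤ x - y := by
        have := (div_le_iff_of_neg hLneg).mp hrl
        linarith
      nlinarith
    · -- y < x : L > 0, D ≥ 0
      have hLpos : 0 < L := by
        have := Real.log_lt_log hy hgt
        simp only [hL]; linarith
      have hDpos : 0 ≤ D := by
        have : y ^ (p - 1) ≤ x ^ (p - 1) := Real.rpow_le_rpow hy.le hgt.le hp1'.le
        have hpd : 0 < p / (p - 1) := by positivity
        rw [hDdef]
        nlinarith
      have h1 : x - y ≤ r x y * L := by
        have := (div_le_iff₀ hLpos).mp hrl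
        linarith
      nlinarith
  -- Step 2: (4/p)(x^{p/2}-y^{p/2})² ≤ (x - y) * D
  have step2 : (4 / p) * (x ^ (p / 2) - y ^ (p / 2)) ^ 2 ≤ (x - y) * D := by
    have hkey : (x ^ (p / 2) - y ^ (p / 2)) ^ 2 ≤
        (p ^ 2 / (4 * (p - 1))) * ((x - y) * (x ^ (p - 1) - y ^ (p - 1))) := by
      rcases lt_or_gt_of_ne hxy with hlt | hgt
      · have := cs_key hp1 hp2 hx hlt
        calc (x ^ (p / 2) - y ^ (p / 2)) ^ 2 = (y ^ (p / 2) - x ^ (p / 2)) ^ 2 := by ring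
          _ ≤ (p ^ 2 / (4 * (p - 1))) * ((y - x) * (y ^ (p - 1) - x ^ (p - 1))) := this
          _ = (p ^ 2 / (4 * (p - 1))) * ((x - y) * (x ^ (p - 1) - y ^ (p - 1))) := by ring
      · exact cs_key hp1 hp2 hy hgt
    have h4p : (0 : ℝ) < 4 / p := by positivity
    have := mul_le_mul_of_nonneg_left hkey h4p.le
    calc (4 / p) * (x ^ (p / 2) - y ^ (p / 2)) ^ 2
        ≤ (4 / p) * ((p ^ 2 / (4 * (p - 1))) * ((x - y) * (x ^ (p - 1) - y ^ (p - 1)))) := this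
      _ = (x - y) * D := by
          rw [hDdef]
          field_simp
  exact step2.trans step1
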